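/- arXiv:2407.16134 — 3 statements merged into one kernel-verified Lean document; each statement's English description precedes it below -/
import Mathlib

section
/- Let P = N(μ, Σ₀) and Q = N(α μ, α² Σ₀ + σ² I) be Gaussians on ℝ^m with α² + σ² = 1, 0 < σ ≤ 1, and λ_max(Σ₀) ≤ C_ν for some C_ν ≥ 1. Then the squared 2-Wasserstein distance satisfies W₂²(P, Q) ≤ (1 − α)² ‖μ‖₂² + C_ν² m σ². -/
open Matrix MeasureTheory ProbabilityTheory Finset

/-- The positive semidefinite square root of a positive semidefinite matrix (the definition
that Mathlib had, since removed). -/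
noncomputable def Matrix.PosSemidef.sqrt {n : Type*} [Fintype n] [DecidableEq n]
    {A : Matrix n n ℝ} (hA : A.PosSemidef) : Matrix n n ℝ :=
  hA.1.eigenvectorUnitary * diagonal ((√·) ∘ hA.1.eigenvalues) *
    (star hA.1.eigenvectorUnitary : Matrix n n ℝ)

/-- Product of `m` i.i.d. standard real Gaussians: the standard Gaussian on `ℝ^m`. -/
noncomputable def stdGaussianPi (m : ℕ) : Measure (Fin m → ℝ) :=
  Measure.pi fun _ => gaussianReal 0 1

/-- The multivariate Gaussian `N(μ, S)` on `ℝ^m`, realized as the law of `μ + S^{1/2} Z`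
for a standard Gaussian `Z`. -/
noncomputable def mvGaussian {m : ℕ} (μ : Fin m → ℝ) {S : Matrix (Fin m) (Fin m) ℝ}
    (hS : S.PosSemidef) : Measure (Fin m → ℝ) :=
  (stdGaussianPi m).map fun z => μ + hS.sqrt.mulVec z

/-- Squared 2-Wasserstein distance, as the infimum of expected squared Euclidean cost
over couplings of `P` and `Q`. -/
noncomputable def W2sq {m : ℕ} (P Q : Measure (Fin m → ℝ)) : ℝ :=
  sInf {c : ℝ | ∃ π : Measure ((Fin m → ℝ) × (Fin m → ℝ)),
    IsProbabilityMeasure π ∧ π.map Prod.fst = P ∧ π.map Prod.snd = Q ∧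
    c = ∫ q, (q.1 - q.2) ⬝ᵥ (q.1 - q.2) ∂π}


section OneDimGauss
open Real
open scoped NNReal ENNReal

lemma gauss_pdf_eq (x : ℝ) : gaussianPDFReal 0 1 x = (√(2*π))⁻¹ * rexp (-(x^2/2)) := by
  rw [gaussianPDFReal_def]
  norm_num [neg_div]

lemma gauss_integral_eq (g : ℝ → ℝ) :
    ∫ x, g x ∂(gaussianReal 0 1) = ∫ x, gaussianPDFReal 0 1 x * g x := by
  rw [gaussianReal_of_var_ne_zero 0 one_ne_zero]
  have h : gaussianPDF 0 1 = fun x => ((Real.toNNReal (gaussianPDFReal 0 1 x) : ℝ≥0) : ℝ≥0∞) := rfl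
  rw [h, integral_withDensity_eq_integral_smul (by
    exact (measurable_gaussianPDFReal 0 1).real_toNNReal) g]
  congr 1 with x
  simp [NNReal.smul_def, Real.coe_toNNReal _ (gaussianPDFReal_nonneg 0 1 x)]

lemma gauss_integrable_iff (g : ℝ → ℝ) :
    Integrable g (gaussianReal 0 1) ↔ Integrable (fun x => gaussianPDFReal 0 1 x * g x) := by
  rw [gaussianReal_of_var_ne_zero 0 one_ne_zero]
  have h : gaussianPDF 0 1 = fun x => ((Real.toNNReal (gaussianPDFReal 0 1 x) : ℝ≥0) : ℝ≥0∞) := rfl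
  rw [h, integrable_withDensity_iff_integrable_smul (by
    exact (measurable_gaussianPDFReal 0 1).real_toNNReal)]
  constructor <;> intro hh <;>
  · refine hh.congr (Filter.Eventually.of_forall fun x => ?_)
    simp [NNReal.smul_def, Real.coe_toNNReal _ (gaussianPDFReal_nonneg 0 1 x)]

lemma Iexp : Integrable fun x : ℝ => rexp (-(x^2/2)) :=
  (integrable_exp_neg_mul_sq (by norm_num : (0:ℝ) < 1/2)).congr
    (Filter.Eventually.of_forall fun x => by ring_nf)

lemma Ix : Integrable fun x : ℝ => x * rexp (-(x^2/2)) :=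
  (integrable_mul_exp_neg_mul_sq (by norm_num : (0:ℝ) < 1/2)).congr
    (Filter.Eventually.of_forall fun x => by ring_nf)

lemma Ix2 : Integrable fun x : ℝ => x^2 * rexp (-(x^2/2)) :=
  (integrable_rpow_mul_exp_neg_mul_sq (by norm_num : (0:ℝ) < 1/2)
      (by norm_num : (-1:ℝ) < 2)).congr
    (Filter.Eventually.of_forall fun x => by
      show x ^ (2:ℝ) * rexp (-(1/2) * x^2) = x^2 * rexp (-(x^2/2))
      rw [show ((2:ℝ)) = ((2:ℕ):ℝ) by norm_num, Real.rpow_natCast]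
      ring_nf)

lemma exp_deriv1 (x : ℝ) :
    HasDerivAt (fun y : ℝ => rexp (-(y^2/2))) (-x * rexp (-(x^2/2))) x := by
  have h : HasDerivAt (fun y : ℝ => -(y^2/2)) (-x) x := by
    have := ((hasDerivAt_pow 2 x).div_const 2).neg
    exact this.congr_deriv (by ring)
  simpa [mul_comm] using h.exp

lemma J1 : ∫ x : ℝ, x * rexp (-(x^2/2)) = 0 := by
  apply integral_eq_zero_of_hasDerivAt_of_integrable
    (f := fun y : ℝ => -rexp (-(y^2/2))) (fun x => ?_) Ix (Iexp.neg)
  have := (exp_deriv1 x).neg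
  exact this.congr_deriv (by ring)

lemma J2 : ∫ x : ℝ, x^2 * rexp (-(x^2/2)) = √(2*π) := by
  have h0 : ∫ x : ℝ, (x^2 * rexp (-(x^2/2)) - rexp (-(x^2/2))) = 0 := by
    apply integral_eq_zero_of_hasDerivAt_of_integrable
      (f := fun y : ℝ => -y * rexp (-(y^2/2))) (fun x => ?_) (Ix2.sub Iexp) (Ix.neg.congr
        (Filter.Eventually.of_forall fun x => by simp only [Pi.neg_apply]; ring))
    have := ((hasDerivAt_id x).neg.mul (exp_deriv1 x))
    exact this.congr_deriv (by simp; ring)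
  have h1 : ∫ x : ℝ, rexp (-(x^2/2)) = √(2*π) := by
    have := integral_gaussian (1/2)
    rw [show π / (1/2) = 2*π by ring] at this
    rw [← this]
    congr 1 with x; ring_nf
  have h2 := integral_sub Ix2 Iexp
  rw [h0, h1] at h2
  linarith [h2]

lemma integrable_id_gauss : Integrable (fun x => x) (gaussianReal 0 1) := by
  rw [gauss_integrable_iff]
  exact (Ix.const_mul (√(2*π))⁻¹).congr
    (Filter.Eventually.of_forall fun x => by simp only [gauss_pdf_eq]; ring)

lemma integrable_sq_gauss : Integrable (fun x => x^2) (gaussianReal 0 1) := by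
  rw [gauss_integrable_iff]
  exact (Ix2.const_mul (√(2*π))⁻¹).congr
    (Filter.Eventually.of_forall fun x => by simp only [gauss_pdf_eq]; ring)

lemma integral_id_gauss : ∫ x, x ∂(gaussianReal 0 1) = 0 := by
  rw [gauss_integral_eq]
  have h : ∀ x:ℝ, gaussianPDFReal 0 1 x * x = (√(2*π))⁻¹ * (x * rexp (-(x^2/2))) :=
    fun x => by rw [gauss_pdf_eq]; ring
  simp_rw [h, integral_const_mul, J1, mul_zero]

lemma integral_sq_gauss : ∫ x, x^2 ∂(gaussianReal 0 1) = 1 := by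
  rw [gauss_integral_eq]
  have h : ∀ x:ℝ, gaussianPDFReal 0 1 x * x^2 = (√(2*π))⁻¹ * (x^2 * rexp (-(x^2/2))) :=
    fun x => by rw [gauss_pdf_eq]; ring
  simp_rw [h, integral_const_mul, J2]
  rw [inv_mul_cancel₀]
  positivity

end OneDimGauss

instance (m : ℕ) : IsProbabilityMeasure (stdGaussianPi m) := by
  unfold stdGaussianPi; infer_instance

section multi

noncomputable local instance gaussMS : MeasureSpace ℝ := ⟨gaussianReal 0 1⟩

noncomputable local instance : SigmaFinite (volume : Measure ℝ) := by
  show SigmaFinite (gaussianReal 0 1); infer_instance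

noncomputable local instance : IsProbabilityMeasure (volume : Measure ℝ) := by
  show IsProbabilityMeasure (gaussianReal 0 1); infer_instance

lemma stdGaussianPi_eq_volume (m : ℕ) : stdGaussianPi m = (volume : Measure (Fin m → ℝ)) := rfl

variable {m : ℕ} (i j : Fin m)

lemma coord_eq_prod (i : Fin m) :
    (fun z : Fin m → ℝ => z i) = fun z => ∏ k, (if k = i then z k else 1) := by
  funext z
  rw [Finset.prod_ite_eq' Finset.univ i (fun k => z k)]
  simp

lemma coord_sq_eq_prod (i : Fin m) :
    (fun z : Fin m → ℝ => z i * z i) = fun z => ∏ k, (if k = i then z k ^ 2 else 1) := by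
  funext z
  rw [Finset.prod_ite_eq' Finset.univ i (fun k => z k ^ 2)]
  simp; ring

lemma coord_mul_eq_prod (hij : i ≠ j) :
    (fun z : Fin m → ℝ => z i * z j) = fun z => ∏ k, (if k = i ∨ k = j then z k else 1) := by
  funext z
  rw [← Finset.prod_subset (Finset.subset_univ ({i, j} : Finset (Fin m)))
    (fun x _ hx => by
      simp only [Finset.mem_insert, Finset.mem_singleton, not_or] at hx
      simp [hx.1, hx.2])]
  rw [Finset.prod_pair hij]
  simp [hij]

lemma integrable_coord : Integrable (fun z => z i) (stdGaussianPi m) := by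
  rw [stdGaussianPi_eq_volume, coord_eq_prod i]
  apply Integrable.fintype_prod_dep (f := fun k t => if k = i then t else 1)
  intro k
  by_cases hk : k = i
  · simp only [if_pos hk]; exact integrable_id_gauss
  · simp only [if_neg hk]; exact integrable_const 1

lemma integral_coord : ∫ z, z i ∂(stdGaussianPi m) = 0 := by
  rw [stdGaussianPi_eq_volume, coord_eq_prod i,
    volume_pi, integral_fintype_prod_eq_prod (fun (k : Fin m) (t : ℝ) => if k = i then t else 1)]
  apply Finset.prod_eq_zero (Finset.mem_univ i)
  simp only [if_pos rfl]
  exact integral_id_gauss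

lemma integrable_coord_sq : Integrable (fun z => z i * z j) (stdGaussianPi m) := by
  rw [stdGaussianPi_eq_volume]
  by_cases hij : i = j
  · subst hij
    rw [coord_sq_eq_prod i]
    apply Integrable.fintype_prod_dep (f := fun k t => if k = i then t ^ 2 else 1)
    intro k
    by_cases hk : k = i
    · simp only [if_pos hk]; exact integrable_sq_gauss
    · simp only [if_neg hk]; exact integrable_const 1
  · rw [coord_mul_eq_prod i j hij]
    apply Integrable.fintype_prod_dep (f := fun k t => if k = i ∨ k = j then t else 1)
    intro k
    by_cases hk : k = i ∨ k = j
    · simp only [if_pos hk]; exact integrable_id_gauss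
    · simp only [if_neg hk]; exact integrable_const 1

lemma integral_coord_sq : ∫ z, z i * z j ∂(stdGaussianPi m)
    = if i = j then 1 else 0 := by
  rw [stdGaussianPi_eq_volume]
  by_cases hij : i = j
  · subst hij
    rw [if_pos rfl, coord_sq_eq_prod i,
      volume_pi, integral_fintype_prod_eq_prod (fun (k : Fin m) (t : ℝ) => if k = i then t ^ 2 else 1)]
    apply Finset.prod_eq_one
    intro k _
    by_cases hk : k = i
    · simp only [if_pos hk]; exact integral_sq_gauss
    · simp only [if_neg hk]; simp
  · rw [if_neg hij, coord_mul_eq_prod i j hij,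
      volume_pi, integral_fintype_prod_eq_prod (fun (k : Fin m) (t : ℝ) => if k = i ∨ k = j then t else 1)]
    apply Finset.prod_eq_zero (Finset.mem_univ i)
    simp only [if_pos (Or.inl rfl)]
    exact integral_id_gauss

end multi

section quad
variable {m : ℕ}

lemma affine_key (i : Fin m) (c : Fin m → ℝ) (M : Matrix (Fin m) (Fin m) ℝ) (z : Fin m → ℝ) :
    (c i + ∑ j, M i j * z j)^2
      = c i^2 + ∑ j, (2 * c i * M i j) * z j
        + ∑ j, ∑ k, (M i j * M i k) * (z j * z k) := by
  have h2 : ∑ j, ∑ k, (M i j * M i k) * (z j * z k)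
      = (∑ j, M i j * z j) * (∑ k, M i k * z k) := by
    rw [Finset.sum_mul_sum]
    exact Finset.sum_congr rfl fun j _ => Finset.sum_congr rfl fun k _ => by ring
  have h1 : ∑ j, (2 * c i * M i j) * z j = 2 * c i * ∑ j, M i j * z j := by
    rw [Finset.mul_sum]
    exact Finset.sum_congr rfl fun j _ => by ring
  rw [h1, h2]; ring

lemma integrable_affine_term (i : Fin m) (c : Fin m → ℝ) (M : Matrix (Fin m) (Fin m) ℝ) :
    Integrable (fun z : Fin m → ℝ => (c i + ∑ j, M i j * z j)^2) (stdGaussianPi m) := by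
  have h : Integrable (fun z : Fin m → ℝ => c i^2 + ∑ j, (2 * c i * M i j) * z j
      + ∑ j, ∑ k, (M i j * M i k) * (z j * z k)) (stdGaussianPi m) := by
    refine (Integrable.add (Integrable.add (integrable_const _) ?_) ?_)
    · exact integrable_finset_sum _ fun j _ => (integrable_coord j).const_mul _
    · exact integrable_finset_sum _ fun j _ =>
        integrable_finset_sum _ fun k _ => (integrable_coord_sq j k).const_mul _
  exact h.congr (Filter.Eventually.of_forall fun z => ((affine_key i c M z).symm))

lemma integral_affine_term (i : Fin m) (c : Fin m → ℝ) (M : Matrix (Fin m) (Fin m) ℝ) :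
    ∫ z, (c i + ∑ j, M i j * z j)^2 ∂(stdGaussianPi m) = c i^2 + ∑ j, (M i j)^2 := by
  have : (fun z : Fin m → ℝ => (c i + ∑ j, M i j * z j)^2)
      = fun z => c i^2 + ∑ j, (2 * c i * M i j) * z j
        + ∑ j, ∑ k, (M i j * M i k) * (z j * z k) := funext fun z => affine_key i c M z
  rw [this]
  have Ia : Integrable (fun z : Fin m → ℝ => ∑ j, (2 * c i * M i j) * z j)
      (stdGaussianPi m) := integrable_finset_sum _ fun j _ => (integrable_coord j).const_mul _
  have Ib : Integrable (fun z : Fin m → ℝ => ∑ j, ∑ k, (M i j * M i k) * (z j * z k))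
      (stdGaussianPi m) := integrable_finset_sum _ fun j _ =>
        integrable_finset_sum _ fun k _ => (integrable_coord_sq j k).const_mul _
  have Ic : Integrable (fun z : Fin m → ℝ => c i^2 + ∑ j, (2 * c i * M i j) * z j)
      (stdGaussianPi m) := (integrable_const _).add Ia
  rw [integral_add Ic Ib, integral_add (integrable_const _) Ia,
    integral_finset_sum _ fun j _ => (integrable_coord j).const_mul _,
    integral_finset_sum _ fun j _ =>
      integrable_finset_sum _ fun k _ => (integrable_coord_sq j k).const_mul _]
  have e1 : ∀ j : Fin m, ∫ z, (2 * c i * M i j) * z j ∂(stdGaussianPi m) = 0 := by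
    intro j; rw [integral_const_mul, integral_coord, mul_zero]
  have e2 : ∀ j : Fin m, (∫ z, ∑ k, (M i j * M i k) * (z j * z k) ∂(stdGaussianPi m))
      = (M i j)^2 := by
    intro j
    rw [integral_finset_sum _ fun k _ => (integrable_coord_sq j k).const_mul _]
    have : ∀ k : Fin m, ∫ z, (M i j * M i k) * (z j * z k) ∂(stdGaussianPi m)
        = (M i j * M i k) * (if j = k then 1 else 0) := by
      intro k; rw [integral_const_mul, integral_coord_sq]
    simp_rw [this]
    simp [mul_ite, Finset.sum_ite_eq, sq]
  simp_rw [e1, e2]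
  have : IsProbabilityMeasure (stdGaussianPi m) := inferInstance
  simp

lemma integral_quadcost (c : Fin m → ℝ) (M : Matrix (Fin m) (Fin m) ℝ) :
    ∫ z, (c + M.mulVec z) ⬝ᵥ (c + M.mulVec z) ∂(stdGaussianPi m)
      = c ⬝ᵥ c + ∑ i, ∑ j, (M i j)^2 := by
  have h : (fun z : Fin m → ℝ => (c + M.mulVec z) ⬝ᵥ (c + M.mulVec z))
      = fun z => ∑ i, (c i + ∑ j, M i j * z j)^2 := by
    funext z
    simp only [dotProduct, Pi.add_apply, mulVec, sq]
  rw [h, integral_finset_sum _ fun i _ => integrable_affine_term i c M]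
  simp_rw [integral_affine_term]
  rw [Finset.sum_add_distrib]
  congr 1
  simp [dotProduct, sq]

end quad

section scalar

lemma scalar_key_alg {u t s Cν : ℝ} (hu0 : 0 ≤ u) (ht0 : 0 ≤ t) (hC : 1 ≤ Cν)
    (hs0 : 0 < s) (hs1 : s ≤ 1) (huC : u ≤ Cν) (hts : s ≤ t)
    (hdiff : (t - u) * (t + u) = s^2 * (1 - u^2)) :
    (u - t)^2 ≤ Cν^2 * s^2 := by
  by_cases hl : u^2 ≤ 1
  · have hut : u ≤ t := by nlinarith
    have key1 : (t - u) * (t + u) ≤ s^2 := by nlinarith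
    have key2 : (t - u) * s ≤ (t - u) * (t + u) :=
      mul_le_mul_of_nonneg_left (by linarith) (by linarith)
    have h4 : t - u ≤ s := le_of_mul_le_mul_right (by nlinarith) hs0
    have h6 : (t - u) * (t - u) ≤ s * s := mul_le_mul h4 h4 (by linarith) hs0.le
    nlinarith [sq_nonneg s, mul_le_mul hC hC zero_le_one (by linarith : (0:ℝ) ≤ Cν)]
  · push_neg at hl
    have htu : t ≤ u := by nlinarith
    have hu1 : 1 ≤ u := by nlinarith
    have key1 : (u - t) * (u + t) ≤ s^2 * u^2 := by nlinarith
    have key2 : (u - t) * u ≤ (u - t) * (u + t) :=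
      mul_le_mul_of_nonneg_left (by linarith) (by linarith)
    have h4 : u - t ≤ s^2 * u :=
      le_of_mul_le_mul_right (by nlinarith) (by linarith : (0:ℝ) < u)
    have h5 : u - t ≤ s * Cν := by nlinarith
    nlinarith

lemma scalar_key {lam Cν a s : ℝ} (hlam0 : 0 ≤ lam) (hlamC : lam ≤ Cν) (hC : 1 ≤ Cν)
    (h1 : a^2 + s^2 = 1) (hs0 : 0 < s) (hs1 : s ≤ 1) :
    (Real.sqrt lam - Real.sqrt (a^2*lam + s^2))^2 ≤ Cν^2 * s^2 := by
  have hb0 : 0 ≤ a^2*lam + s^2 := by positivity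
  have hu2 : (Real.sqrt lam)^2 = lam := Real.sq_sqrt hlam0
  have ht2 : (Real.sqrt (a^2*lam + s^2))^2 = a^2*lam + s^2 := Real.sq_sqrt hb0
  refine scalar_key_alg (Real.sqrt_nonneg _) (Real.sqrt_nonneg _) hC hs0 hs1 ?_ ?_ ?_
  · have h' : lam ≤ Cν^2 := by nlinarith
    have h2 := Real.sqrt_le_sqrt h'
    rwa [Real.sqrt_sq (by linarith : (0:ℝ) ≤ Cν)] at h2
  · have h' : s^2 ≤ a^2*lam + s^2 := by nlinarith
    have h2 := Real.sqrt_le_sqrt h'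
    rwa [Real.sqrt_sq hs0.le] at h2
  · nlinarith

end scalar

section sandwich
variable {n : Type*} [Fintype n] [DecidableEq n]

lemma sandwich_mul (V : Matrix n n ℝ) (hV : star V * V = 1) (d e : n → ℝ) :
    (V * diagonal d * star V) * (V * diagonal e * star V)
      = V * diagonal (fun i => d i * e i) * star V := by
  simp only [Matrix.mul_assoc]
  rw [← Matrix.mul_assoc (star V) V, hV, Matrix.one_mul,
    ← Matrix.mul_assoc (diagonal d), diagonal_mul_diagonal]

lemma sandwich_trace (V : Matrix n n ℝ) (hV : star V * V = 1) (d : n → ℝ) :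
    trace (V * diagonal d * star V) = ∑ i, d i := by
  rw [trace_mul_cycle, hV, Matrix.one_mul, trace_diagonal]

lemma sandwich_star (V : Matrix n n ℝ) (d : n → ℝ) :
    star (V * diagonal d * star V) = V * diagonal d * star V := by
  simp only [StarMul.star_mul, star_star, Matrix.star_eq_conjTranspose (diagonal d),
    diagonal_conjTranspose]
  rw [Matrix.mul_assoc]
  simp

lemma frob_eq_trace (N : Matrix n n ℝ) (hN : star N = N) :
    ∑ i, ∑ j, (N i j)^2 = trace (N * N) := by
  have hsym : ∀ i j, N j i = N i j := by
    intro i j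
    conv_lhs => rw [← hN]
    simp [Matrix.star_eq_conjTranspose, conjTranspose_apply]
  rw [trace]
  simp only [diag_apply, Matrix.mul_apply]
  rw [Finset.sum_comm]
  exact Finset.sum_congr rfl fun i _ => Finset.sum_congr rfl fun j _ => by
    rw [hsym i j]; ring

end sandwich


lemma psd_sqrt_eq_cfc {m : ℕ} {A : Matrix (Fin m) (Fin m) ℝ} (hA : A.PosSemidef) :
    hA.sqrt = cfc Real.sqrt A := by
  rw [hA.1.cfc_eq]; rfl

lemma dot_self_nonneg {m : ℕ} (v : Fin m → ℝ) : 0 ≤ v ⬝ᵥ v :=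
  Finset.sum_nonneg fun i _ => mul_self_nonneg _

lemma measurable_mulVec {m : ℕ} (N : Matrix (Fin m) (Fin m) ℝ) :
    Measurable fun z : Fin m → ℝ => N.mulVec z :=
  measurable_pi_lambda _ fun i => by
    simp only [mulVec, dotProduct]
    exact Finset.measurable_sum _ fun j _ => (measurable_pi_apply j).const_mul _

lemma continuous_cost {m : ℕ} :
    Continuous fun q : (Fin m → ℝ) × (Fin m → ℝ) => (q.1 - q.2) ⬝ᵥ (q.1 - q.2) := by
  simp only [dotProduct, Pi.sub_apply]
  refine continuous_finset_sum _ fun i _ => Continuous.mul ?_ ?_ <;>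
    exact ((continuous_apply i).comp continuous_fst).sub ((continuous_apply i).comp continuous_snd)

/-- Wasserstein bound between a Gaussian and its Ornstein–Uhlenbeck
perturbation: for `P = N(μ, Σ₀)` and `Q = N(αμ, α²Σ₀ + σ²I)` with `α² + σ² = 1`,
`0 < σ ≤ 1`, and `λ_max(Σ₀) ≤ C_ν` with `C_ν ≥ 1`,
`W₂²(P, Q) ≤ (1 - α)² ‖μ‖₂² + C_ν² m σ²`. -/
theorem gaussian_W2_bound {m : ℕ} (μ : Fin m → ℝ) (S₀ : Matrix (Fin m) (Fin m) ℝ)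
    (hsym : S₀.IsSymm) (hpsd : S₀.PosSemidef)
    (α σ Cν : ℝ) (h1 : α ^ 2 + σ ^ 2 = 1) (hσ0 : 0 < σ) (hσ1 : σ ≤ 1) (hC : 1 ≤ Cν)
    (hmax : ∀ x : Fin m → ℝ, x ⬝ᵥ S₀.mulVec x ≤ Cν * (x ⬝ᵥ x))
    (hQ : (α ^ 2 • S₀ + σ ^ 2 • (1 : Matrix (Fin m) (Fin m) ℝ)).PosSemidef) :
    W2sq (mvGaussian μ hpsd) (mvGaussian (α • μ) hQ)
      ≤ (1 - α) ^ 2 * (μ ⬝ᵥ μ) + Cν ^ 2 * m * σ ^ 2 := by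
  classical
  have : IsProbabilityMeasure (stdGaussianPi m) := inferInstance
  set lam := hpsd.1.eigenvalues with hlamdef
  set V : Matrix (Fin m) (Fin m) ℝ := (hpsd.1.eigenvectorUnitary : Matrix (Fin m) (Fin m) ℝ)
    with hVdef
  have hVV : star V * V = 1 := Unitary.coe_star_mul_self _
  have hVV' : V * star V = 1 := Unitary.coe_mul_star_self _
  have hspec : S₀ = V * diagonal lam * star V := by
    have h := hpsd.1.spectral_theorem
    convert h using 3
    rfl
  have hlam0 : ∀ i, 0 ≤ lam i := fun i => hpsd.eigenvalues_nonneg i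
  have hlamC : ∀ i, lam i ≤ Cν := by
    intro i
    have hx := hpsd.1.mulVec_eigenvectorBasis i
    set x : Fin m → ℝ := ⇑(hpsd.1.eigenvectorBasis i) with hxdef
    have hxx : x ⬝ᵥ x = 1 := by
      have hn := hpsd.1.eigenvectorBasis.orthonormal.1 i
      have h2 : ‖hpsd.1.eigenvectorBasis i‖^2 = x ⬝ᵥ x := by
        rw [EuclideanSpace.norm_eq, Real.sq_sqrt (by positivity)]
        simp [dotProduct, Real.norm_eq_abs, sq_abs, sq]
        rfl
      rw [hn] at h2
      simpa using h2.symm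
    have h := hmax x
    rw [hx, dotProduct_smul, smul_eq_mul, hxx, mul_one, mul_one] at h
    exact h
  set dA : Fin m → ℝ := fun i => Real.sqrt (lam i) with hdA
  set dB : Fin m → ℝ := fun i => Real.sqrt (α^2 * lam i + σ^2) with hdB
  have hApsd : PosSemidef (V * diagonal dA * star V) := by
    have h := (posSemidef_diagonal_iff.mpr
      (fun i => Real.sqrt_nonneg _ : ∀ i, 0 ≤ dA i)).mul_mul_conjTranspose_same V
    simpa [Matrix.star_eq_conjTranspose] using h
  have hBpsd : PosSemidef (V * diagonal dB * star V) := by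
    have h := (posSemidef_diagonal_iff.mpr
      (fun i => Real.sqrt_nonneg _ : ∀ i, 0 ≤ dB i)).mul_mul_conjTranspose_same V
    simpa [Matrix.star_eq_conjTranspose] using h
  have hA2 : (V * diagonal dA * star V)^2 = S₀ := by
    rw [pow_two, sandwich_mul V hVV,
      show (fun i => dA i * dA i) = lam from funext fun i => Real.mul_self_sqrt (hlam0 i)]
    exact hspec.symm
  have hB2 : (V * diagonal dB * star V)^2 = α ^ 2 • S₀ + σ ^ 2 • 1 := by
    rw [pow_two, sandwich_mul V hVV,
      show (fun i => dB i * dB i) = fun i => α^2 * lam i + σ^2 from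
        funext fun i => Real.mul_self_sqrt
          (add_nonneg (mul_nonneg (sq_nonneg α) (hlam0 i)) (sq_nonneg σ))]
    have hdiag : diagonal (fun i => α^2 * lam i + σ^2)
        = α^2 • diagonal lam + σ^2 • (1 : Matrix (Fin m) (Fin m) ℝ) := by
      ext i j
      by_cases hij : i = j <;>
        simp [Matrix.diagonal_apply, Matrix.one_apply, hij]
    rw [hdiag, Matrix.mul_add, Matrix.add_mul, Matrix.mul_smul, Matrix.smul_mul,
      Matrix.mul_smul, Matrix.smul_mul, Matrix.mul_one, hVV', ← hspec]
  have hAeq : hpsd.sqrt = V * diagonal dA * star V := rfl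
  have hBeq : hQ.sqrt = V * diagonal dB * star V := by
    have hg : α ^ 2 • S₀ + σ ^ 2 • (1 : Matrix (Fin m) (Fin m) ℝ)
        = cfc (fun x => α^2 * x + σ^2) S₀ := by
      rw [cfc_add_const (σ^2) (fun x => α^2 * x) S₀ (ha := hpsd.1.isSelfAdjoint),
        cfc_const_mul_id _ _ hpsd.1.isSelfAdjoint, Algebra.algebraMap_eq_smul_one]
    rw [psd_sqrt_eq_cfc, hg, ← cfc_comp Real.sqrt _ S₀ hpsd.1.isSelfAdjoint, hpsd.1.cfc_eq]
    rfl
  have hM : hpsd.sqrt - hQ.sqrt = V * diagonal (fun i => dA i - dB i) * star V := by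
    rw [hAeq, hBeq, ← Matrix.sub_mul, ← Matrix.mul_sub,
      show diagonal dA - diagonal dB = diagonal (fun i => dA i - dB i) from
        diagonal_sub dA dB]
  have hfrob : ∑ i, ∑ j, ((hpsd.sqrt - hQ.sqrt) i j)^2 = ∑ i, (dA i - dB i)^2 := by
    rw [hM, frob_eq_trace _ (sandwich_star V _), sandwich_mul V hVV, sandwich_trace V hVV]
    exact Finset.sum_congr rfl fun i _ => (sq _).symm
  have hsum : ∑ i, (dA i - dB i)^2 ≤ Cν^2 * m * σ^2 := by
    calc ∑ i, (dA i - dB i)^2 ≤ ∑ _i : Fin m, Cν^2 * σ^2 :=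
          Finset.sum_le_sum fun i _ =>
            scalar_key (hlam0 i) (hlamC i) hC h1 hσ0 hσ1
      _ = m * (Cν^2 * σ^2) := by
          rw [Finset.sum_const, Finset.card_univ, Fintype.card_fin, nsmul_eq_mul]
      _ = Cν^2 * m * σ^2 := by ring
  -- the coupling
  set A := hpsd.sqrt with hAdef
  set B := hQ.sqrt with hBdef
  set T : (Fin m → ℝ) → (Fin m → ℝ) × (Fin m → ℝ) :=
    fun z => (μ + A.mulVec z, α • μ + B.mulVec z) with hTdef
  have hT : Measurable T :=
    ((measurable_mulVec A).const_add μ).prodMk ((measurable_mulVec B).const_add (α • μ))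
  set cpl : Measure ((Fin m → ℝ) × (Fin m → ℝ)) := (stdGaussianPi m).map T with hcpldef
  have hcplprob : IsProbabilityMeasure cpl := Measure.isProbabilityMeasure_map hT.aemeasurable
  have hfst : cpl.map Prod.fst = mvGaussian μ hpsd := by
    rw [hcpldef, Measure.map_map measurable_fst hT]; rfl
  have hsnd : cpl.map Prod.snd = mvGaussian (α • μ) hQ := by
    rw [hcpldef, Measure.map_map measurable_snd hT]; rfl
  have hcost : ∫ q, (q.1 - q.2) ⬝ᵥ (q.1 - q.2) ∂cpl
      = (1-α)^2 * (μ ⬝ᵥ μ) + ∑ i, ∑ j, ((A - B) i j)^2 := by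
    rw [hcpldef, integral_map hT.aemeasurable continuous_cost.aestronglyMeasurable]
    have he : (fun z => ((T z).1 - (T z).2) ⬝ᵥ ((T z).1 - (T z).2))
        = fun z => ((μ - α • μ) + (A - B).mulVec z) ⬝ᵥ ((μ - α • μ) + (A - B).mulVec z) := by
      funext z
      rw [show (T z).1 - (T z).2 = (μ - α • μ) + (A - B).mulVec z by
        rw [hTdef]; simp only [Matrix.sub_mulVec]; abel]
    rw [he, integral_quadcost]
    congr 1
    rw [show μ - α • μ = (1 - α) • μ by rw [sub_smul, one_smul],
      smul_dotProduct, dotProduct_smul, smul_eq_mul, smul_eq_mul]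
    ring
  have hbdd : BddBelow {c : ℝ | ∃ p : Measure ((Fin m → ℝ) × (Fin m → ℝ)),
      IsProbabilityMeasure p ∧ p.map Prod.fst = mvGaussian μ hpsd ∧
      p.map Prod.snd = mvGaussian (α • μ) hQ ∧
      c = ∫ q, (q.1 - q.2) ⬝ᵥ (q.1 - q.2) ∂p} := by
    refine ⟨0, fun c hc => ?_⟩
    obtain ⟨cpl', _, _, _, rfl⟩ := hc
    exact integral_nonneg fun q => dot_self_nonneg _
  have hmem : ((1-α)^2 * (μ ⬝ᵥ μ) + ∑ i, ∑ j, ((A - B) i j)^2) ∈ {c : ℝ |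
      ∃ p : Measure ((Fin m → ℝ) × (Fin m → ℝ)),
      IsProbabilityMeasure p ∧ p.map Prod.fst = mvGaussian μ hpsd ∧
      p.map Prod.snd = mvGaussian (α • μ) hQ ∧
      c = ∫ q, (q.1 - q.2) ⬝ᵥ (q.1 - q.2) ∂p} :=
    ⟨cpl, hcplprob, hfst, hsnd, hcost.symm⟩
  refine le_trans (csInf_le hbdd hmem) ?_
  have h2 : ∑ i, ∑ j, ((A - B) i j)^2 ≤ Cν^2 * m * σ^2 := by
    rw [hAdef, hBdef, hfrob]; exact hsum
  linarith
end

section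
/- The softmax map σ: ℝ^d → ℝ^d, σ(x)_i = e^{x_i} / Σ_j e^{x_j}, is 1-Lipschitz with respect to the Euclidean norm; i.e. ‖σ(x) − σ(y)‖₂ ≤ ‖x − y‖₂ for all x, y ∈ ℝ^d. -/
open Matrix Finset

/-- Euclidean norm of a vector in `ℝ^d`. -/
noncomputable def l2norm {d : ℕ} (v : Fin d → ℝ) : ℝ := Real.sqrt (v ⬝ᵥ v)

/-- The softmax map on `ℝ^d`. -/
noncomputable def softmax {d : ℕ} (x : Fin d → ℝ) : Fin d → ℝ :=
  fun i => Real.exp (x i) / ∑ j, Real.exp (x j)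

section aux
variable {d : ℕ}

/-- sum of exponentials -/
noncomputable def smS (x : Fin d → ℝ) : ℝ := ∑ j, Real.exp (x j)

lemma smS_pos [NeZero d] (x : Fin d → ℝ) : 0 < smS x :=
  Finset.sum_pos (fun _ _ => Real.exp_pos _) ⟨⟨0, Nat.pos_of_ne_zero (NeZero.ne d)⟩, mem_univ _⟩

/-- the mean functional `v ↦ ∑ p i * v i` as a CLM on plain pi type -/
noncomputable def smM (x : Fin d → ℝ) : (Fin d → ℝ) →L[ℝ] ℝ :=
  ∑ j, softmax x j • ContinuousLinearMap.proj j

lemma smM_apply (x v : Fin d → ℝ) : smM x v = ∑ j, softmax x j * v j := by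
  simp [smM, ContinuousLinearMap.sum_apply]

/-- Jacobian of softmax as a CLM on the plain pi type. -/
noncomputable def smJ (x : Fin d → ℝ) : (Fin d → ℝ) →L[ℝ] (Fin d → ℝ) :=
  ContinuousLinearMap.pi fun i => softmax x i • (ContinuousLinearMap.proj i - smM x)

lemma smJ_apply (x v : Fin d → ℝ) (i : Fin d) :
    smJ x v i = softmax x i * (v i - ∑ j, softmax x j * v j) := by
  simp [smJ, smM_apply, ContinuousLinearMap.pi_apply]

lemma softmax_hasFDerivAt [NeZero d] (x : Fin d → ℝ) :
    HasFDerivAt softmax (smJ x) x := by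
  apply hasFDerivAt_pi''
  intro i
  rw [smJ, ContinuousLinearMap.proj_pi]
  have hS0 : smS x ≠ 0 := (smS_pos x).ne'
  have hExp : HasFDerivAt (fun y : Fin d → ℝ => Real.exp (y i))
      ((Real.exp (x i) • ContinuousLinearMap.proj i : (Fin d → ℝ) →L[ℝ] ℝ)) x := by
    exact HasDerivAt.comp_hasFDerivAt (f := fun y : Fin d → ℝ => y i) x
      (Real.hasDerivAt_exp (x i)) (hasFDerivAt_apply (𝕜 := ℝ) i x)
  have hS : HasFDerivAt (fun y : Fin d → ℝ => smS y)
      (∑ j, (Real.exp (x j) • ContinuousLinearMap.proj j : (Fin d → ℝ) →L[ℝ] ℝ)) x := by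
    apply HasFDerivAt.fun_sum
    intro j _
    exact HasDerivAt.comp_hasFDerivAt (f := fun y : Fin d → ℝ => y j) x
      (Real.hasDerivAt_exp (x j)) (hasFDerivAt_apply (𝕜 := ℝ) j x)
  have hInv : HasFDerivAt (fun y : Fin d → ℝ => (smS y)⁻¹)
      ((-(smS x ^ 2)⁻¹) • ∑ j, (Real.exp (x j) • ContinuousLinearMap.proj j : (Fin d → ℝ) →L[ℝ] ℝ)) x := by
    exact HasDerivAt.comp_hasFDerivAt (f := fun y : Fin d → ℝ => smS y) x
      (hasDerivAt_inv hS0) hS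
  have hMul := hExp.fun_mul hInv
  have heq : (fun y : Fin d → ℝ => softmax y i)
      = fun y : Fin d → ℝ => Real.exp (y i) * (smS y)⁻¹ := by
    funext y; rw [softmax, div_eq_mul_inv]; rfl
  rw [heq]
  refine hMul.congr_fderiv ?_
  ext v
  have hSdef : (∑ j, Real.exp (x j)) = smS x := rfl
  simp only [ContinuousLinearMap.add_apply, ContinuousLinearMap.smul_apply,
    ContinuousLinearMap.sub_apply, ContinuousLinearMap.coe_smul', Pi.smul_apply,
    ContinuousLinearMap.sum_apply, ContinuousLinearMap.proj_apply, smM_apply,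
    smul_eq_mul, softmax, hSdef]
  have e1 : ∑ j, Real.exp (x j) / smS x * v j = (∑ j, Real.exp (x j) * v j) / smS x := by
    rw [Finset.sum_div]; exact Finset.sum_congr rfl fun j _ => by ring
  rw [e1]
  field_simp
  ring

lemma smJ_norm_le [NeZero d] (x : Fin d → ℝ) (v : Fin d → ℝ) :
    Real.sqrt (∑ i, (smJ x v i) ^ 2) ≤ Real.sqrt (∑ i, (v i) ^ 2) := by
  have hS0 : 0 < smS x := smS_pos x
  set p : Fin d → ℝ := softmax x with hp
  have hp0 : ∀ i, 0 ≤ p i := fun i => div_nonneg (Real.exp_pos _).le hS0.le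
  have hpsum : ∑ i, p i = 1 := by
    simp only [hp, softmax]
    rw [← Finset.sum_div]
    exact div_self hS0.ne'
  have hp1 : ∀ i, p i ≤ 1 := by
    intro i
    rw [← hpsum]
    exact Finset.single_le_sum (fun j _ => hp0 j) (mem_univ i)
  apply Real.sqrt_le_sqrt
  set m : ℝ := ∑ j, p j * v j with hm
  calc ∑ i, (smJ x v i) ^ 2 = ∑ i, (p i * (v i - m)) ^ 2 := by
        apply Finset.sum_congr rfl; intro i _; rw [smJ_apply]
    _ ≤ ∑ i, p i * (v i - m) ^ 2 := by
        apply Finset.sum_le_sum; intro i _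
        rw [mul_pow]
        apply mul_le_mul_of_nonneg_right _ (sq_nonneg _)
        nlinarith [hp0 i, hp1 i]
    _ = (∑ i, p i * v i ^ 2) - m ^ 2 := by
        have : ∑ i, p i * (v i - m) ^ 2
            = ∑ i, (p i * v i ^ 2 - 2 * m * (p i * v i) + m ^ 2 * p i) := by
          apply Finset.sum_congr rfl; intro i _; ring
        rw [this, Finset.sum_add_distrib, Finset.sum_sub_distrib, ← Finset.mul_sum,
          ← Finset.mul_sum, ← hm, hpsum]
        ring
    _ ≤ ∑ i, p i * v i ^ 2 := by nlinarith [sq_nonneg m]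
    _ ≤ ∑ i, v i ^ 2 := by
        apply Finset.sum_le_sum; intro i _
        nlinarith [hp1 i, sq_nonneg (v i)]

end aux

/-- Softmax is 1-Lipschitz with respect to the Euclidean norm. -/
theorem softmax_one_lipschitz {d : ℕ} (x y : Fin d → ℝ) :
    l2norm (softmax x - softmax y) ≤ l2norm (x - y) := by
  rcases Nat.eq_zero_or_pos d with hd | hd
  · subst hd
    simp [l2norm, dotProduct]
  have : NeZero d := ⟨hd.ne'⟩
  -- work in EuclideanSpace
  set e : EuclideanSpace ℝ (Fin d) ≃L[ℝ] (Fin d → ℝ) :=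
    PiLp.continuousLinearEquiv 2 ℝ (fun _ : Fin d => ℝ) with he
  have hl2 : ∀ v : Fin d → ℝ, l2norm v = ‖e.symm v‖ := by
    intro v
    rw [l2norm, EuclideanSpace.norm_eq]
    congr 1
    apply Finset.sum_congr rfl
    intro i _
    simp [he, dotProduct, Real.norm_eq_abs, sq_abs, sq]
  set f : EuclideanSpace ℝ (Fin d) → EuclideanSpace ℝ (Fin d) :=
    fun z => e.symm (softmax (e z)) with hf
  set J : EuclideanSpace ℝ (Fin d) → (EuclideanSpace ℝ (Fin d) →L[ℝ] EuclideanSpace ℝ (Fin d)) :=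
    fun z => (e.symm.toContinuousLinearMap.comp (smJ (e z))).comp e.toContinuousLinearMap with hJ
  have hder : ∀ z, HasFDerivAt f (J z) z := by
    intro z
    exact (e.symm.toContinuousLinearMap.hasFDerivAt).comp z
      (((softmax_hasFDerivAt (e z)).comp z e.toContinuousLinearMap.hasFDerivAt))
  have hnorm : ∀ z, ‖J z‖ ≤ 1 := by
    intro z
    apply ContinuousLinearMap.opNorm_le_bound _ zero_le_one
    intro v
    rw [one_mul]
    have h1 : ‖J z v‖ = Real.sqrt (∑ i, (smJ (e z) (e v) i) ^ 2) := by
      rw [hJ]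
      simp only [ContinuousLinearMap.comp_apply, ContinuousLinearEquiv.coe_coe]
      rw [EuclideanSpace.norm_eq]
      congr 1
      apply Finset.sum_congr rfl
      intro i _
      simp [he, Real.norm_eq_abs, sq_abs]
    have h2 : ‖v‖ = Real.sqrt (∑ i, (e v i) ^ 2) := by
      rw [EuclideanSpace.norm_eq]
      congr 1
      apply Finset.sum_congr rfl
      intro i _
      simp [he, Real.norm_eq_abs, sq_abs]
    rw [h1, h2]
    exact smJ_norm_le (e z) (e v)
  have key := Convex.norm_image_sub_le_of_norm_hasFDerivWithin_le
    (f := f) (f' := J) (s := Set.univ) (C := 1)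
    (fun z _ => (hder z).hasFDerivWithinAt) (fun z _ => hnorm z)
    convex_univ (Set.mem_univ (e.symm y)) (Set.mem_univ (e.symm x))
  have hfx : f (e.symm x) = e.symm (softmax x) := by simp [hf]
  have hfy : f (e.symm y) = e.symm (softmax y) := by simp [hf]
  rw [hfx, hfy, one_mul, ← map_sub, ← map_sub] at key
  rw [hl2, hl2]
  exact key
end

section
/- For every B ≥ 1 and ε ∈ (0,1), there exists a ReLU network R: [−B,B]² → ℝ with depth O(log(B/ε)), width at most 4 per layer (with residual connections of inner dimension 3), and weight magnitudes O(B), such that |R(x, y) − x·y| ≤ ε for all x, y ∈ [−B, B]. -/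
open Matrix

/-- Entrywise ReLU on vectors. -/
def reluV {n : ℕ} (v : Fin n → ℝ) : Fin n → ℝ := fun i => max (v i) 0

/-- One residual block of identity-path width `3` and inner width `4`:
`y ↦ y + W₂ ReLU(W₁ y + b₂) + b₁`. -/
def resBlock (W₁ : Matrix (Fin 4) (Fin 3) ℝ) (W₂ : Matrix (Fin 3) (Fin 4) ℝ)
    (b₁ : Fin 3 → ℝ) (b₂ : Fin 4 → ℝ) (y : Fin 3 → ℝ) : Fin 3 → ℝ :=
  y + W₂.mulVec (reluV (W₁.mulVec y + b₂)) + b₁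

/-- Iterated application of the first `L` residual blocks. -/
def resIter (W₁ : ℕ → Matrix (Fin 4) (Fin 3) ℝ) (W₂ : ℕ → Matrix (Fin 3) (Fin 4) ℝ)
    (b₁ : ℕ → Fin 3 → ℝ) (b₂ : ℕ → Fin 4 → ℝ) : ℕ → (Fin 3 → ℝ) → (Fin 3 → ℝ)
  | 0 => id
  | L + 1 => resBlock (W₁ L) (W₂ L) (b₁ L) (b₂ L) ∘ resIter W₁ W₂ b₁ b₂ L

/-! ### Auxiliary: the hat function and Yarotsky's square-approximation -/

noncomputable def gg (t : ℝ) : ℝ := 2 * max t 0 - 4 * max (t - 1/2) 0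

lemma gg_nonneg_eval {a : ℝ} (ha : 0 ≤ a) : gg a = 2*a - 4 * max (a - 1/2) 0 := by
  simp [gg, max_eq_left ha]

lemma gg_mem {t : ℝ} (h0 : 0 ≤ t) (h1 : t ≤ 1) : 0 ≤ gg t ∧ gg t ≤ 1 := by
  rcases le_total t (1/2) with h | h
  · rw [gg_nonneg_eval h0, max_eq_right (by linarith)]; constructor <;> linarith
  · rw [gg_nonneg_eval h0, max_eq_left (by linarith)]; constructor <;> linarith

lemma gg_identity {t : ℝ} (h0 : 0 ≤ t) (h1 : t ≤ 1) :
    t - t^2 = gg t/2 - (gg t)^2/4 := by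
  rcases le_total t (1/2) with h | h
  · rw [gg_nonneg_eval h0, max_eq_right (by linarith)]; ring
  · rw [gg_nonneg_eval h0, max_eq_left (by linarith)]; ring

lemma ggIter_mem {t : ℝ} (h0 : 0 ≤ t) (h1 : t ≤ 1) (k : ℕ) :
    0 ≤ gg^[k] t ∧ gg^[k] t ≤ 1 := by
  induction k with
  | zero => exact ⟨h0, h1⟩
  | succ k ih =>
    rw [Function.iterate_succ_apply']
    exact gg_mem ih.1 ih.2

noncomputable def DD : ℕ → ℝ → ℝ
  | 0, _ => 0
  | (m+1), t => DD m t + gg^[m+1] t / 4^(m+1)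

lemma DD_succ (m : ℕ) (t : ℝ) : DD (m+1) t = gg t/4 + DD m (gg t)/4 := by
  induction m generalizing t with
  | zero => simp [DD]
  | succ m ih =>
    rw [show DD (m+2) t = DD (m+1) t + gg^[m+2] t / 4^(m+2) from rfl, ih,
        Function.iterate_succ_apply]
    rw [show DD (m+1) (gg t) = DD m (gg t) + gg^[m+1] (gg t) / 4^(m+1) from rfl]
    ring

lemma EE_bound (m : ℕ) : ∀ t : ℝ, 0 ≤ t → t ≤ 1 → |t - DD m t - t^2| ≤ (1/4)^m/4 := by
  induction m with
  | zero =>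
    intro t h0 h1
    simp only [DD, pow_zero, sub_zero]
    rw [abs_le]; constructor <;> nlinarith [sq_nonneg (t - 1/2)]
  | succ m ih =>
    intro t h0 h1
    obtain ⟨hg0, hg1⟩ := gg_mem h0 h1
    have hI := ih (gg t) hg0 hg1
    have hid := gg_identity h0 h1
    have key : t - DD (m+1) t - t^2 = (gg t - DD m (gg t) - (gg t)^2)/4 := by
      rw [DD_succ]; linarith
    rw [key, abs_div, abs_of_nonneg (by norm_num : (0:ℝ) ≤ 4)]
    calc |gg t - DD m (gg t) - (gg t)^2| / 4 ≤ ((1/4)^m/4)/4 := by linarith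
      _ = (1/4)^(m+1)/4 := by ring

/-! ### The explicit ResNet weights -/

def myW1 (k : ℕ) : Matrix (Fin 4) (Fin 3) ℝ :=
  if k = 0 then 0 else !![1,0,0; 1,0,0; 0,1,0; 0,1,0]
noncomputable def myW2 (B : ℝ) (k : ℕ) : Matrix (Fin 3) (Fin 4) ℝ :=
  if k = 0 then 0 else
    !![1,-4,0,0; 0,0,1,-4; 8*B/4^k, -16*B/4^k, -8*B/4^k, 16*B/4^k]
noncomputable def myb1 (k : ℕ) : Fin 3 → ℝ := if k = 0 then ![1/2,1/2,0] else 0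
noncomputable def myb2 (k : ℕ) : Fin 4 → ℝ := if k = 0 then 0 else ![0,-1/2,0,-1/2]
noncomputable def myAin (B : ℝ) : Matrix (Fin 3) (Fin 2) ℝ :=
  !![1/(4*B), 1/(4*B); 1/(4*B), -(1/(4*B)); 0,0]
noncomputable def myBout (B : ℝ) : Matrix (Fin 1) (Fin 3) ℝ := !![0,0,-B]

lemma block_eval (B : ℝ) (k : ℕ) (a b c : ℝ) (ha : 0 ≤ a) (hb : 0 ≤ b) :
    resBlock (myW1 (k+1)) (myW2 B (k+1)) (myb1 (k+1)) (myb2 (k+1)) ![a,b,c]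
      = ![gg a, gg b, c + 4*B*(gg a - gg b)/4^(k+1)] := by
  funext i
  fin_cases i <;>
  · simp [resBlock, myW1, myW2, myb1, myb2, reluV, Matrix.mulVec, dotProduct,
      Fin.sum_univ_succ, Matrix.vecHead, Matrix.vecTail, Function.comp,
      gg_nonneg_eval ha, gg_nonneg_eval hb, max_eq_left ha, max_eq_left hb]
    ring

lemma block0_eval (B : ℝ) (v : Fin 3 → ℝ) :
    resBlock (myW1 0) (myW2 B 0) (myb1 0) (myb2 0) v = v + ![1/2,1/2,0] := by
  funext i
  fin_cases i <;>
    simp [resBlock, myW1, myW2, myb1, myb2, reluV, Matrix.mulVec, dotProduct,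
      Fin.sum_univ_succ]

lemma ain_eval (B x y : ℝ) :
    (myAin B).mulVec ![x,y] = ![(x+y)/(4*B), (x-y)/(4*B), 0] := by
  funext i
  fin_cases i <;>
    simp [myAin, Matrix.mulVec, dotProduct, Fin.sum_univ_succ,
      Matrix.vecHead, Matrix.vecTail, Function.comp] <;>
    ring

lemma bout_eval (B a b c : ℝ) :
    (myBout B).mulVec ![a,b,c] 0 = -B * c := by
  simp [myBout, Matrix.mulVec, dotProduct, Fin.sum_univ_succ,
    Matrix.vecHead, Matrix.vecTail, Function.comp]

lemma iter_eval (B : ℝ) (x y : ℝ) (u v : ℝ)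
    (hu : u = (x+y)/(4*B) + 1/2) (hv : v = (x-y)/(4*B) + 1/2)
    (hu0 : 0 ≤ u) (hu1 : u ≤ 1) (hv0 : 0 ≤ v) (hv1 : v ≤ 1) (k : ℕ) :
    resIter myW1 (myW2 B) myb1 myb2 (k+1) ((myAin B).mulVec ![x,y])
      = ![gg^[k] u, gg^[k] v, 4*B*(DD k u - DD k v)] := by
  induction k with
  | zero =>
    show resBlock (myW1 0) (myW2 B 0) (myb1 0) (myb2 0) ((myAin B).mulVec ![x,y]) = _
    rw [ain_eval, block0_eval]
    funext i; fin_cases i <;> simp [DD, hu, hv]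
  | succ k ih =>
    show resBlock (myW1 (k+1)) (myW2 B (k+1)) (myb1 (k+1)) (myb2 (k+1))
        (resIter myW1 (myW2 B) myb1 myb2 (k+1) ((myAin B).mulVec ![x,y])) = _
    rw [ih, block_eval B k _ _ _ (ggIter_mem hu0 hu1 k).1 (ggIter_mem hv0 hv1 k).1]
    funext i; fin_cases i <;>
      simp [← Function.iterate_succ_apply' gg k, DD]
    ring

lemma entry_bound {B : ℝ} (hB : 1 ≤ B) {c : ℝ} (hc : |c| ≤ 16) (k : ℕ) :
    |c*B/4^k| ≤ 16*B := by
  have hp : (0:ℝ) < (4:ℝ)^k := by positivity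
  have h1 : (1:ℝ) ≤ (4:ℝ)^k := one_le_pow₀ (by norm_num)
  rw [abs_div, abs_of_nonneg hp.le, abs_mul, abs_of_nonneg (by linarith : (0:ℝ) ≤ B)]
  calc |c| * B / 4^k ≤ |c| * B := div_le_self (by positivity) h1
    _ ≤ 16*B := by nlinarith [abs_nonneg c]

set_option maxHeartbeats 1000000 in
/-- Deep ReLU (residual) networks approximate the product: there is a
universal constant `C` such that for every `B ≥ 1` and `ε ∈ (0,1)` there is a ReLU ResNet
with identity-path width `3`, block width `4`, depth at most `C log(B/ε) + C`, and all
weight magnitudes at most `C·B`, computing a function `R` with `|R(x,y) - xy| ≤ ε` on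
`[-B,B]²`. -/
theorem relu_resnet_approximates_product :
    ∃ C : ℝ, 0 < C ∧ ∀ B ε : ℝ, 1 ≤ B → 0 < ε → ε < 1 →
      ∃ (L : ℕ) (W₁ : ℕ → Matrix (Fin 4) (Fin 3) ℝ) (W₂ : ℕ → Matrix (Fin 3) (Fin 4) ℝ)
        (b₁ : ℕ → Fin 3 → ℝ) (b₂ : ℕ → Fin 4 → ℝ)
        (Ain : Matrix (Fin 3) (Fin 2) ℝ) (Bout : Matrix (Fin 1) (Fin 3) ℝ),
        (L : ℝ) ≤ C * Real.log (B / ε) + C ∧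
        (∀ k i j, |W₁ k i j| ≤ C * B) ∧ (∀ k i j, |W₂ k i j| ≤ C * B) ∧
        (∀ k i, |b₁ k i| ≤ C * B) ∧ (∀ k i, |b₂ k i| ≤ C * B) ∧
        (∀ i j, |Ain i j| ≤ C * B) ∧ (∀ i j, |Bout i j| ≤ C * B) ∧
        (∀ x y : ℝ, |x| ≤ B → |y| ≤ B →
          |(Bout.mulVec (resIter W₁ W₂ b₁ b₂ L (Ain.mulVec ![x, y]))) 0 - x * y| ≤ ε) := by
  refine ⟨16, by norm_num, ?_⟩
  intro B ε hB hε hε1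
  have hB0 : (0:ℝ) < B := lt_of_lt_of_le one_pos hB
  have h4B : (0:ℝ) < 4*B := by linarith
  have harg : (0:ℝ) < 2*B^2/ε := by positivity
  have hlog2 : Real.log 2 < 1 := by
    have := Real.log_two_lt_d9; linarith
  have hlog4 : (1:ℝ) < Real.log 4 := by
    have h2 := Real.log_two_gt_d9
    have : Real.log 4 = 2 * Real.log 2 := by
      rw [show (4:ℝ) = 2^2 by norm_num, Real.log_pow]; push_cast; ring
    linarith
  have ht0 : 0 ≤ Real.log (B/ε) := Real.log_nonneg (by
    rw [le_div_iff₀ hε]; nlinarith)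
  set L := Nat.ceil (Real.log (2*B^2/ε) / Real.log 4) with hLdef
  refine ⟨L+1, myW1, myW2 B, myb1, myb2, myAin B, myBout B, ?_, ?_, ?_, ?_, ?_, ?_, ?_, ?_⟩
  · -- depth bound
    have hq0 : 0 ≤ Real.log (2*B^2/ε) / Real.log 4 := by
      apply div_nonneg _ (by linarith)
      apply Real.log_nonneg
      rw [le_div_iff₀ hε]; nlinarith
    have hceil : (L:ℝ) < Real.log (2*B^2/ε) / Real.log 4 + 1 :=
      Nat.ceil_lt_add_one hq0
    have hdiv : Real.log (2*B^2/ε) / Real.log 4 ≤ Real.log (2*B^2/ε) :=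
      div_le_self (by
        apply Real.log_nonneg; rw [le_div_iff₀ hε]; nlinarith) (by linarith)
    have hlogle : Real.log (2*B^2/ε) ≤ Real.log 2 + 2 * Real.log (B/ε) := by
      have h1 : 2*B^2/ε ≤ 2*(B/ε)^2 := by
        have he : (2:ℝ)*(B/ε)^2 = (2*B^2)/ε^2 := by ring
        rw [he, div_le_div_iff₀ hε (by positivity)]
        nlinarith [sq_nonneg B, mul_le_of_le_one_right hε.le hε1.le]
      calc Real.log (2*B^2/ε) ≤ Real.log (2*(B/ε)^2) :=
            Real.log_le_log harg h1
        _ = Real.log 2 + 2 * Real.log (B/ε) := by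
            rw [Real.log_mul (by norm_num) (by positivity), Real.log_pow]
            push_cast; ring
    push_cast
    linarith
  · -- W₁ bounds
    intro k i j
    rcases Nat.eq_zero_or_pos k with hk | hk
    · subst hk; simp [myW1]; nlinarith
    · have hk' : k ≠ 0 := hk.ne'
      fin_cases i <;> fin_cases j <;> norm_num [myW1, hk'] <;> nlinarith
  · -- W₂ bounds
    intro k i j
    rcases Nat.eq_zero_or_pos k with hk | hk
    · subst hk; simp [myW2]; nlinarith
    · have hk' : k ≠ 0 := hk.ne'
      fin_cases i <;> fin_cases j <;>
        norm_num [myW2, hk'] <;>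
        first
          | nlinarith
          | (refine entry_bound hB ?_ k; norm_num)
          | (rw [neg_div, abs_neg]; refine entry_bound hB ?_ k; norm_num)
  · -- b₁ bounds
    intro k i
    rcases Nat.eq_zero_or_pos k with hk | hk
    · subst hk; fin_cases i <;> norm_num [myb1] <;>
        first
          | nlinarith
          | (rw [abs_le]; constructor <;> nlinarith)
    · have hk' : k ≠ 0 := hk.ne'
      norm_num [myb1, hk']; nlinarith
  · -- b₂ bounds
    intro k i
    rcases Nat.eq_zero_or_pos k with hk | hk
    · subst hk; norm_num [myb2]; nlinarith
    · have hk' : k ≠ 0 := hk.ne'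
      fin_cases i <;> norm_num [myb2, hk'] <;>
        first
          | nlinarith
          | (rw [abs_le]; constructor <;> nlinarith)
  · -- Ain bounds
    intro i j
    have h1 : |1/(4*B)| ≤ 16*B := by
      rw [abs_of_nonneg (by positivity), div_le_iff₀ h4B]; nlinarith
    fin_cases i <;> fin_cases j <;> norm_num [myAin] <;>
      first
        | nlinarith
        | (rw [abs_of_nonneg (by positivity), div_le_iff₀ h4B]; nlinarith)
        | (rw [abs_neg]; rw [abs_of_nonneg (by positivity), div_le_iff₀ h4B]; nlinarith)
        | (rw [abs_le]; constructor <;>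
            nlinarith [inv_nonneg.mpr hB0.le, inv_le_one_of_one_le₀ hB])
        | (rw [abs_of_pos hB0]; nlinarith [inv_nonneg.mpr hB0.le, inv_le_one_of_one_le₀ hB])
  · -- Bout bounds
    intro i j
    fin_cases i <;> fin_cases j <;> norm_num [myBout] <;>
      first
        | nlinarith
        | (rw [abs_neg, abs_of_nonneg hB0.le]; nlinarith)
        | (rw [abs_of_nonneg hB0.le]; nlinarith)
  · -- approximation
    intro x y hx hy
    obtain ⟨hx1, hx2⟩ := abs_le.mp hx
    obtain ⟨hy1, hy2⟩ := abs_le.mp hy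
    set u : ℝ := (x+y)/(4*B) + 1/2 with hu
    set v : ℝ := (x-y)/(4*B) + 1/2 with hv
    have hu0 : 0 ≤ u := by
      rw [hu]
      have : -(1/2 : ℝ) ≤ (x+y)/(4*B) := by rw [neg_le, ← neg_div, div_le_iff₀ h4B]; nlinarith
      linarith
    have hu1 : u ≤ 1 := by
      rw [hu]
      have : (x+y)/(4*B) ≤ 1/2 := by rw [div_le_iff₀ h4B]; nlinarith
      linarith
    have hv0 : 0 ≤ v := by
      rw [hv]
      have : -(1/2 : ℝ) ≤ (x-y)/(4*B) := by rw [neg_le, ← neg_div, div_le_iff₀ h4B]; nlinarith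
      linarith
    have hv1 : v ≤ 1 := by
      rw [hv]
      have : (x-y)/(4*B) ≤ 1/2 := by rw [div_le_iff₀ h4B]; nlinarith
      linarith
    rw [iter_eval B x y u v hu hv hu0 hu1 hv0 hv1 L, bout_eval]
    have hxy : x*y = 4*B^2*((u^2 - v^2) - (u - v)) := by
      rw [hu, hv]; field_simp; ring
    have hEu := EE_bound L u hu0 hu1
    have hEv := EE_bound L v hv0 hv1
    have hrew : -B * (4*B*(DD L u - DD L v)) - x*y
        = 4*B^2 * ((u - DD L u - u^2) - (v - DD L v - v^2)) := by
      rw [hxy]; ring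
    rw [hrew]
    have hb2 : (0:ℝ) ≤ 4*B^2 := by positivity
    have hLle : 2*B^2 * (1/4)^L ≤ ε := by
      have hceil : Real.log (2*B^2/ε) / Real.log 4 ≤ (L:ℝ) := Nat.le_ceil _
      have hlog : Real.log (2*B^2/ε) ≤ (L:ℝ) * Real.log 4 := by
        rw [div_le_iff₀ (by linarith : (0:ℝ) < Real.log 4)] at hceil
        linarith
      have h4L : 2*B^2/ε ≤ 4^L := by
        have : Real.log (2*B^2/ε) ≤ Real.log (4^L) := by
          rw [Real.log_pow]; push_cast; linarith
        exact (Real.log_le_log_iff harg (by positivity)).mp this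
      have hp : (0:ℝ) < 4^L := by positivity
      rw [div_le_iff₀ hε] at h4L
      rw [one_div, inv_pow, ← div_eq_mul_inv, div_le_iff₀ hp]
      nlinarith
    calc |4*B^2 * ((u - DD L u - u^2) - (v - DD L v - v^2))|
        = 4*B^2 * |(u - DD L u - u^2) - (v - DD L v - v^2)| := by
          rw [abs_mul, abs_of_nonneg hb2]
      _ ≤ 4*B^2 * (|u - DD L u - u^2| + |v - DD L v - v^2|) := by
          apply mul_le_mul_of_nonneg_left _ hb2
          exact abs_sub _ _
      _ ≤ 4*B^2 * ((1/4)^L/4 + (1/4)^L/4) := by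
          apply mul_le_mul_of_nonneg_left _ hb2
          linarith
      _ = 2*B^2 * (1/4)^L := by ring
      _ ≤ ε := hLle
end
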